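/- Let p and v be scalar polynomials over an algebraically closed field, with p of degree k ≥ 1 and v nonzero of degree at most k-1. If p and v have no common root, then there exists λ such that the Bézout matrix B(p, (x-λ)v) (with both arguments regarded as grade-k polynomials) is nonsingular. -/

import Mathlib

lemma fin2_apply0 (a b : ℕ) :
    (Finsupp.single (0:Fin 2) a + Finsupp.single (1:Fin 2) b : Fin 2 →₀ ℕ) 0 = a := by
  simp [Finsupp.single_apply]

lemma fin2_apply1 (a b : ℕ) :
    (Finsupp.single (0:Fin 2) a + Finsupp.single (1:Fin 2) b : Fin 2 →₀ ℕ) 1 = b := by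
  simp [Finsupp.single_apply]

lemma fin2_eq_iff (d : Fin 2 →₀ ℕ) (a b : ℕ) :
    d = Finsupp.single (0:Fin 2) a + Finsupp.single (1:Fin 2) b ↔ d 0 = a ∧ d 1 = b := by
  constructor
  · rintro rfl; exact ⟨fin2_apply0 a b, fin2_apply1 a b⟩
  · rintro ⟨h0, h1⟩
    refine Finsupp.ext fun i => ?_
    fin_cases i
    · simpa using (fin2_apply0 a b).symm ▸ h0
    · simpa using (fin2_apply1 a b).symm ▸ h1

lemma fin2_sub0 (a b : ℕ) :
    Finsupp.single (0:Fin 2) (a+1) + Finsupp.single (1:Fin 2) b - Finsupp.single (0:Fin 2) 1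
      = Finsupp.single (0:Fin 2) a + Finsupp.single (1:Fin 2) b := by
  refine Finsupp.ext fun i => ?_
  rw [Finsupp.tsub_apply]
  fin_cases i <;> simp [Finsupp.single_apply]

lemma fin2_sub1 (a b : ℕ) :
    Finsupp.single (0:Fin 2) a + Finsupp.single (1:Fin 2) (b+1) - Finsupp.single (1:Fin 2) 1
      = Finsupp.single (0:Fin 2) a + Finsupp.single (1:Fin 2) b := by
  refine Finsupp.ext fun i => ?_
  rw [Finsupp.tsub_apply]
  fin_cases i <;> simp [Finsupp.single_apply]

open Polynomial in
lemma aux_coeff {F : Type*} [CommSemiring F] (B : MvPolynomial (Fin 2) F) (a b : ℕ) :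
    (((MvPolynomial.aeval ![(X : (F[X])[X]), C X]) B).coeff a).coeff b
      = MvPolynomial.coeff (Finsupp.single 0 a + Finsupp.single 1 b) B := by
  induction B using MvPolynomial.induction_on generalizing a b with
  | C r =>
      rw [MvPolynomial.aeval_C, MvPolynomial.coeff_C]
      have h : algebraMap F ((F[X])[X]) r = C (C r) := rfl
      rw [h]
      have h0 : ((0 : Fin 2 →₀ ℕ) = Finsupp.single 0 a + Finsupp.single 1 b) ↔ (a = 0 ∧ b = 0) := by
        rw [fin2_eq_iff]; simp [eq_comm]
      by_cases hab : a = 0 ∧ b = 0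
      · obtain ⟨rfl, rfl⟩ := hab
        rw [if_pos (h0.mpr ⟨rfl, rfl⟩)]; simp
      · rw [if_neg (fun hh => hab (h0.mp hh))]
        rcases eq_or_ne a 0 with rfl | ha
        · have hb : b ≠ 0 := fun hb => hab ⟨rfl, hb⟩
          rw [coeff_C, if_pos rfl, coeff_C, if_neg hb]
        · rw [coeff_C, if_neg ha, coeff_zero]
  | add p q hp hq => simp [map_add, coeff_add, hp, hq, MvPolynomial.coeff_add]
  | mul_X q i hq =>
      rw [map_mul, MvPolynomial.coeff_mul_X']
      match i with
      | 0 =>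
        rw [MvPolynomial.aeval_X]
        simp only [Matrix.cons_val_zero]
        match a with
        | 0 =>
            rw [if_neg (by rw [Finsupp.mem_support_iff, fin2_apply0]; simp)]
            simp [coeff_mul_X]
        | a+1 =>
            rw [if_pos (Finsupp.mem_support_iff.mpr (by rw [fin2_apply0]; simp)),
              fin2_sub0, ← hq a b, coeff_mul_X]
      | 1 =>
        rw [MvPolynomial.aeval_X]
        simp only [Matrix.cons_val_one, Matrix.head_cons, Matrix.cons_val_zero]
        rw [mul_comm, coeff_C_mul]
        match b with
        | 0 =>
            rw [if_neg (by rw [Finsupp.mem_support_iff, fin2_apply1]; simp)]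
            simp [coeff_X_mul]
        | b+1 =>
            rw [if_pos (Finsupp.mem_support_iff.mpr (by rw [fin2_apply1]; simp)),
              fin2_sub1, ← hq a b, coeff_X_mul]

open Polynomial in
lemma aux_divquot {F : Type*} [Field F] (P : F[X]) (b : (F[X])[X])
    (hb : P.map (C : F →+* F[X]) - C P = (X - C X) * b)
    (m s : ℕ) : (b.coeff m).coeff s = P.coeff (m + s + 1) := by
  have hrec : ∀ n, b.coeff n = C (P.coeff (n+1)) + X * b.coeff (n+1) := by
    intro n
    have h := congrArg (fun f => Polynomial.coeff f (n+1)) hb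
    simp only [coeff_sub, coeff_map, sub_mul, coeff_X_mul, coeff_C_mul] at h
    rw [coeff_C, if_neg (Nat.succ_ne_zero n)] at h
    -- h : C (P.coeff (n+1)) - 0 = b.coeff n - X * b.coeff (n+1)
    rw [sub_zero] at h
    rw [h]; ring
  have hvan : ∀ n, P.natDegree ≤ n → b.coeff n = 0 := by
    intro n hn
    rcases eq_or_ne b 0 with rfl | hb0
    · simp
    · have hXC : (X - C (X : F[X])) ≠ 0 := (monic_X_sub_C _).ne_zero
      have hdeg : ((X - C (X : F[X])) * b).natDegree = 1 + b.natDegree := by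
        rw [natDegree_mul hXC hb0, natDegree_X_sub_C]
      have hle : (P.map (C : F →+* F[X]) - C P).natDegree ≤ P.natDegree := by
        refine (natDegree_sub_le _ _).trans ?_
        simp [natDegree_map_le]
      rw [hb, hdeg] at hle
      exact coeff_eq_zero_of_natDegree_lt (by omega)
  suffices H : ∀ t m s, P.natDegree ≤ m + t → (b.coeff m).coeff s = P.coeff (m + s + 1) by
    exact H P.natDegree m s (Nat.le_add_left _ _)
  intro t
  induction t with
  | zero =>
      intro m s hm
      rw [hvan m (by omega), coeff_zero]
      exact (coeff_eq_zero_of_natDegree_lt (by omega)).symm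
  | succ t ih =>
      intro m s hm
      rw [hrec m, coeff_add]
      match s with
      | 0 => simp [coeff_C, coeff_X_mul]  -- ?
      | s+1 =>
          rw [coeff_C, if_neg (Nat.succ_ne_zero s), coeff_X_mul, zero_add,
            ih (m+1) s (by omega)]
          ring_nf

open MvPolynomial

/-- Over an algebraically closed field, if p (degree k ≥ 1) and v
(nonzero, degree ≤ k-1) have no common root, then there exists λ such that the
k×k Bézout matrix B(p,(x-λ)v) (grade k) is nonsingular. -/
theorem exists_lambda_bezout_nonsingular {F : Type*} [Field F] [IsAlgClosed F]
    (k : ℕ) (hk : 1 ≤ k) (p v : Polynomial F) (hp : p.degree = (k : ℕ))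
    (hv : v ≠ 0) (hvd : v.degree ≤ ((k - 1 : ℕ) : ℕ))
    (hcommon : ∀ z : F, p.eval z = 0 → v.eval z ≠ 0) :
    ∃ lam : F, ∀ B : MvPolynomial (Fin 2) F,
      (X 0 - X 1 : MvPolynomial (Fin 2) F) * B =
          Polynomial.aeval (X 1 : MvPolynomial (Fin 2) F) p *
              Polynomial.aeval (X 0 : MvPolynomial (Fin 2) F)
                ((Polynomial.X - Polynomial.C lam) * v) -
            Polynomial.aeval (X 1 : MvPolynomial (Fin 2) F)
                ((Polynomial.X - Polynomial.C lam) * v) *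
              Polynomial.aeval (X 0 : MvPolynomial (Fin 2) F) p →
        (Matrix.of fun i j : Fin k => MvPolynomial.coeff
            (Finsupp.single (0 : Fin 2) (k - 1 - (j : ℕ)) +
              Finsupp.single (1 : Fin 2) (k - 1 - (i : ℕ))) B).det ≠ 0 := by
  classical
  have hp0 : p ≠ 0 := fun h => by
    rw [h, Polynomial.degree_zero] at hp
    exact absurd hp.symm (by simp)
  have hnd : p.natDegree = k := Polynomial.natDegree_eq_of_degree_eq_some hp
  have hlc : p.coeff k ≠ 0 := by
    rw [← hnd]
    exact Polynomial.leadingCoeff_ne_zero.mpr hp0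
  have hndv : v.natDegree ≤ k - 1 := Polynomial.natDegree_le_iff_degree_le.mpr hvd
  -- choose lam
  obtain ⟨lam, hlam0⟩ := Infinite.exists_notMem_finset p.roots.toFinset
  have hlam : p.eval lam ≠ 0 := fun h =>
    hlam0 (Multiset.mem_toFinset.mpr ((Polynomial.mem_roots hp0).mpr h))
  refine ⟨lam, ?_⟩
  set q : Polynomial F := (Polynomial.X - Polynomial.C lam) * v with hqdef
  have hndq : q.natDegree ≤ k := by
    refine (Polynomial.natDegree_mul_le).trans ?_
    rw [Polynomial.natDegree_X_sub_C]
    omega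
  -- coprimality
  have hcop : IsCoprime p q := by
    have h1 : IsCoprime (Polynomial.X - Polynomial.C lam) p :=
      ((Polynomial.irreducible_X_sub_C lam).coprime_iff_not_dvd).mpr
        (fun hdvd => hlam ((Polynomial.dvd_iff_isRoot).mp hdvd))
    have hpv : IsCoprime p v := by
      rw [← EuclideanDomain.gcd_isUnit_iff]
      by_contra hu
      have hdeg : (EuclideanDomain.gcd p v).degree ≠ 0 := fun h =>
        hu (Polynomial.isUnit_iff_degree_eq_zero.mpr h)
      obtain ⟨z, hz⟩ := IsAlgClosed.exists_root _ hdeg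
      exact hcommon z
        (Polynomial.eval_eq_zero_of_dvd_of_eval_eq_zero (EuclideanDomain.gcd_dvd_left p v) hz)
        (Polynomial.eval_eq_zero_of_dvd_of_eval_eq_zero (EuclideanDomain.gcd_dvd_right p v) hz)
    exact IsCoprime.mul_right h1.symm hpv
  intro B hB hdet
  set M : Matrix (Fin k) (Fin k) F := Matrix.of fun i j : Fin k => MvPolynomial.coeff
      (Finsupp.single (0 : Fin 2) (k - 1 - (j : ℕ)) +
        Finsupp.single (1 : Fin 2) (k - 1 - (i : ℕ))) B with hMdef
  obtain ⟨c, hc0, hker⟩ := Matrix.exists_mulVec_eq_zero_iff.mpr hdet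
  -- the algebra map to F[y][x]
  set B' := (MvPolynomial.aeval
    ![(Polynomial.X : Polynomial (Polynomial F)), Polynomial.C Polynomial.X]) B with hB'def
  have e1 : ∀ r : Polynomial F,
      Polynomial.aeval (Polynomial.C (Polynomial.X : Polynomial F)) r = Polynomial.C r := by
    intro r
    have h := Polynomial.aeval_algHom_apply (Polynomial.CAlgHom (R := F) (A := Polynomial F))
      Polynomial.X r
    simp only [Polynomial.aeval_X_left_apply, Polynomial.CAlgHom_apply] at h
    exact h
  have e0 : ∀ r : Polynomial F,
      Polynomial.aeval (Polynomial.X : Polynomial (Polynomial F)) r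
        = r.map (Polynomial.C : F →+* Polynomial F) := by
    intro r
    rw [Polynomial.aeval_def]
    rfl
  have hEq' : (Polynomial.X - Polynomial.C (Polynomial.X : Polynomial F)) * B' =
      Polynomial.C p * (q.map (Polynomial.C : F →+* Polynomial F)) -
        Polynomial.C q * (p.map (Polynomial.C : F →+* Polynomial F)) := by
    have h := congrArg (MvPolynomial.aeval
      ![(Polynomial.X : Polynomial (Polynomial F)), Polynomial.C Polynomial.X]) hB
    simp only [map_mul, map_sub, ← Polynomial.aeval_algHom_apply, MvPolynomial.aeval_X,
      Matrix.cons_val_zero, Matrix.cons_val_one, Matrix.head_cons, e1, e0] at h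
    exact h
  have hXCne : (Polynomial.X - Polynomial.C (Polynomial.X : Polynomial F)) ≠ 0 :=
    (Polynomial.monic_X_sub_C _).ne_zero
  have hBtop : ∀ m, k ≤ m → B'.coeff m = 0 := by
    intro m hm
    rcases eq_or_ne B' 0 with h0 | h0
    · rw [h0, Polynomial.coeff_zero]
    · have hdeg : ((Polynomial.X - Polynomial.C (Polynomial.X : Polynomial F)) * B').natDegree
          = 1 + B'.natDegree := by
        rw [Polynomial.natDegree_mul hXCne h0, Polynomial.natDegree_X_sub_C]
      have hle : (Polynomial.C p * (q.map (Polynomial.C : F →+* Polynomial F)) -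
          Polynomial.C q * (p.map (Polynomial.C : F →+* Polynomial F))).natDegree ≤ k := by
        refine (Polynomial.natDegree_sub_le _ _).trans (max_le ?_ ?_)
        · refine (Polynomial.natDegree_mul_le).trans ?_
          simp only [Polynomial.natDegree_C, zero_add]
          exact Polynomial.natDegree_map_le.trans hndq
        · refine (Polynomial.natDegree_mul_le).trans ?_
          simp only [Polynomial.natDegree_C, zero_add]
          exact Polynomial.natDegree_map_le.trans (le_of_eq hnd)
      rw [← hEq', hdeg] at hle
      exact Polynomial.coeff_eq_zero_of_natDegree_lt (by omega)
  have hX01 : (X 0 - X 1 : MvPolynomial (Fin 2) F) ≠ 0 := by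
    intro h0
    have h := congrArg (MvPolynomial.eval (fun i : Fin 2 => if i = 0 then (1:F) else 0)) h0
    simp at h
  have hsymEq : MvPolynomial.rename (Equiv.swap (0:Fin 2) 1) B = B := by
    have h := congrArg (MvPolynomial.rename (Equiv.swap (0:Fin 2) 1)) hB
    simp only [map_mul, map_sub, ← Polynomial.aeval_algHom_apply, MvPolynomial.rename_X,
      Equiv.swap_apply_left, Equiv.swap_apply_right] at h
    exact mul_left_cancel₀ hX01 (by linear_combination -h - hB)
  have hsym : ∀ a b : ℕ, MvPolynomial.coeff (Finsupp.single 0 a + Finsupp.single 1 b) B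
      = MvPolynomial.coeff (Finsupp.single 0 b + Finsupp.single 1 a) B := by
    intro a b
    have h := MvPolynomial.coeff_rename_mapDomain (Equiv.swap (0:Fin 2) 1)
      (Equiv.injective _) B (Finsupp.single 0 a + Finsupp.single 1 b)
    rw [hsymEq] at h
    rw [← h]
    congr 1
    rw [Finsupp.mapDomain_add, Finsupp.mapDomain_single, Finsupp.mapDomain_single,
      Equiv.swap_apply_left, Equiv.swap_apply_right, add_comm]
  set γ : Polynomial F := ∑ j : Fin k, Polynomial.monomial (j:ℕ) (c j) with hγdef
  have hγ : ∀ n, γ.coeff n = if h : n < k then c ⟨n, h⟩ else 0 := by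
    intro n
    rw [hγdef, Polynomial.finset_sum_coeff]
    simp only [Polynomial.coeff_monomial]
    split
    · next h =>
        rw [Finset.sum_eq_single (⟨n, h⟩ : Fin k)]
        · rw [if_pos rfl]
        · intro b _ hbne
          rw [if_neg (fun hh => hbne (Fin.ext hh))]
        · intro habs; exact absurd (Finset.mem_univ _) habs
    · next h =>
        refine Finset.sum_eq_zero fun j _ => ?_
        rw [if_neg (fun hh : (j:ℕ) = n => h (hh ▸ j.isLt))]
  have hγne : γ ≠ 0 := by
    obtain ⟨j, hj⟩ := Function.ne_iff.mp hc0
    intro h0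
    apply hj
    have h := hγ (j : ℕ)
    rw [h0, Polynomial.coeff_zero, dif_pos j.isLt] at h
    simpa using h.symm
  have hγdeg : γ.natDegree ≤ k - 1 := by
    refine Polynomial.natDegree_le_iff_coeff_eq_zero.mpr fun m hm => ?_
    rw [hγ m, dif_neg (by omega)]
  set γ' := γ.map (Polynomial.C : F →+* Polynomial F) with hγ'def
  obtain ⟨b₁, hb₁⟩ : ∃ b₁, p.map (Polynomial.C : F →+* Polynomial F) - Polynomial.C p
      = (Polynomial.X - Polynomial.C (Polynomial.X : Polynomial F)) * b₁ := by
    have h := Polynomial.X_sub_C_dvd_sub_C_eval (a := (Polynomial.X : Polynomial F))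
      (p := p.map (Polynomial.C : F →+* Polynomial F))
    rw [Polynomial.eval_map, Polynomial.eval₂_C_X] at h
    exact h
  obtain ⟨d₂, hd₂⟩ : ∃ d₂, q.map (Polynomial.C : F →+* Polynomial F) - Polynomial.C q
      = (Polynomial.X - Polynomial.C (Polynomial.X : Polynomial F)) * d₂ := by
    have h := Polynomial.X_sub_C_dvd_sub_C_eval (a := (Polynomial.X : Polynomial F))
      (p := q.map (Polynomial.C : F →+* Polynomial F))
    rw [Polynomial.eval_map, Polynomial.eval₂_C_X] at h
    exact h
  have hB'eq : B' = Polynomial.C p * d₂ - Polynomial.C q * b₁ :=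
    mul_left_cancel₀ hXCne
      (by linear_combination hEq' + Polynomial.C p * hd₂ - Polynomial.C q * hb₁)
  have hLB : (B' * γ').coeff (k-1) = 0 := by
    refine Polynomial.ext fun s => ?_
    rw [Polynomial.coeff_zero, Polynomial.coeff_mul, Polynomial.finset_sum_coeff]
    have hterm : ∀ x ∈ Finset.HasAntidiagonal.antidiagonal (k-1),
        (B'.coeff x.1 * γ'.coeff x.2).coeff s
          = MvPolynomial.coeff (Finsupp.single 0 x.1 + Finsupp.single 1 s) B * γ.coeff x.2 := by
      intro x _
      rw [hγ'def, Polynomial.coeff_map, Polynomial.coeff_mul_C, hB'def, aux_coeff]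
    rw [Finset.sum_congr rfl hterm]
    rcases lt_or_ge s k with hs | hs
    · have hker' := congrFun hker ⟨k - 1 - s, by omega⟩
      simp only [Matrix.mulVec, dotProduct, Pi.zero_apply] at hker'
      calc ∑ x ∈ Finset.HasAntidiagonal.antidiagonal (k-1),
            MvPolynomial.coeff (Finsupp.single 0 x.1 + Finsupp.single 1 s) B * γ.coeff x.2
          = ∑ m ∈ Finset.range k,
            MvPolynomial.coeff (Finsupp.single 0 m + Finsupp.single 1 s) B
              * γ.coeff (k-1-m) := by
            have hsucc : (k-1).succ = k := by omega
            rw [Finset.Nat.sum_antidiagonal_eq_sum_range_succ_mk, hsucc]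
        _ = ∑ m ∈ Finset.range k, MvPolynomial.coeff
              (Finsupp.single 0 (k-1-m) + Finsupp.single 1 s) B * γ.coeff (k-1-(k-1-m)) :=
            (Finset.sum_range_reflect (fun m => MvPolynomial.coeff
              (Finsupp.single 0 m + Finsupp.single 1 s) B * γ.coeff (k-1-m)) k).symm
        _ = ∑ j : Fin k, MvPolynomial.coeff
              (Finsupp.single 0 (k-1-(j:ℕ)) + Finsupp.single 1 s) B
                * γ.coeff (k-1-(k-1-(j:ℕ))) :=
            (Fin.sum_univ_eq_sum_range (fun m => MvPolynomial.coeff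
              (Finsupp.single 0 (k-1-m) + Finsupp.single 1 s) B * γ.coeff (k-1-(k-1-m))) k).symm
        _ = ∑ j : Fin k, M ⟨k-1-s, by omega⟩ j * c j := by
            refine Finset.sum_congr rfl fun j _ => ?_
            have h1 : k-1-(k-1-(j:ℕ)) = (j:ℕ) := by omega
            have h2 : k-1-(k-1-s) = s := by omega
            rw [h1, hγ, dif_pos j.isLt, hMdef]
            simp only [Matrix.of_apply, h2, Fin.eta]
        _ = 0 := hker'
    · refine Finset.sum_eq_zero fun x _ => ?_
      rw [hsym x.1 s, ← aux_coeff, ← hB'def, hBtop s hs, Polynomial.coeff_zero, zero_mul]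
  set W₁ := (b₁ * γ').coeff (k-1) with hW₁def
  set W₂ := (d₂ * γ').coeff (k-1) with hW₂def
  have hpq : q * W₁ = p * W₂ := by
    have h2 : (0:Polynomial F) = p * W₂ - q * W₁ := by
      rw [hW₁def, hW₂def, ← hLB, hB'eq, sub_mul, Polynomial.coeff_sub, mul_assoc, mul_assoc,
        Polynomial.coeff_C_mul, Polynomial.coeff_C_mul]
    linear_combination h2
  have hdvdW : p ∣ W₁ := hcop.dvd_of_dvd_mul_left ⟨W₂, hpq⟩
  have hWcoeff : ∀ s, W₁.coeff s
      = ∑ x ∈ Finset.HasAntidiagonal.antidiagonal (k-1), p.coeff (x.1 + s + 1) * γ.coeff x.2 := by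
    intro s
    rw [hW₁def, Polynomial.coeff_mul, Polynomial.finset_sum_coeff]
    refine Finset.sum_congr rfl fun x _ => ?_
    rw [hγ'def, Polynomial.coeff_map, Polynomial.coeff_mul_C, aux_divquot p b₁ hb₁]
  have hW₁ne : W₁ ≠ 0 := by
    intro h0
    have hmem : ((k-1) - γ.natDegree, γ.natDegree) ∈ Finset.HasAntidiagonal.antidiagonal (k-1) := by
      rw [Finset.HasAntidiagonal.mem_antidiagonal]; omega
    have h := hWcoeff γ.natDegree
    rw [h0, Polynomial.coeff_zero, Finset.sum_eq_single_of_mem _ hmem] at h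
    · have harith : (k-1-γ.natDegree) + γ.natDegree + 1 = k := by omega
      rw [harith] at h
      have hγlc : γ.coeff γ.natDegree ≠ 0 :=
        fun hh => hγne (Polynomial.leadingCoeff_eq_zero.mp hh)
      exact (mul_ne_zero hlc hγlc) h.symm
    · intro y hy hne
      have hmem' := Finset.HasAntidiagonal.mem_antidiagonal.mp hy
      rcases lt_trichotomy y.2 γ.natDegree with h2 | h2 | h2
      · have hlt : p.natDegree < y.1 + γ.natDegree + 1 := by rw [hnd]; omega
        rw [Polynomial.coeff_eq_zero_of_natDegree_lt hlt, zero_mul]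
      · exfalso
        apply hne
        have hy1 : y.1 = k - 1 - γ.natDegree := by omega
        exact Prod.ext hy1 h2
      · rw [Polynomial.coeff_eq_zero_of_natDegree_lt h2, mul_zero]
  have hWdeg : W₁.natDegree ≤ k - 1 := by
    refine Polynomial.natDegree_le_iff_coeff_eq_zero.mpr fun m hm => ?_
    rw [hWcoeff m]
    refine Finset.sum_eq_zero fun x hx => ?_
    have hlt : p.natDegree < x.1 + m + 1 := by rw [hnd]; omega
    rw [Polynomial.coeff_eq_zero_of_natDegree_lt hlt, zero_mul]
  have hfin := Polynomial.natDegree_le_of_dvd hdvdW hW₁ne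
  rw [hnd] at hfin
  omega
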